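/- The characteristic function of a symmetric Lévy distribution, P̃(k) = A·exp(−c|k|^μ) with A, c > 0 and 0 < μ < 1, has critical order μ at k = 0: the LFD 𝔻^q P̃(0) equals 0 for 0 < q < μ and fails to exist for μ < q < 1. -/

import Mathlib

open Real Filter Set Topology Asymptotics
open MeasureTheory intervalIntegral

/-- Riemann-Liouville fractional derivative of order `q ∈ (0,1)` with lower limit `a`. -/
noncomputable def rlDeriv (q a : ℝ) (f : ℝ → ℝ) (x : ℝ) : ℝ :=
  (1 / Real.Gamma (1 - q)) * deriv (fun t => ∫ y in a..t, f y / (t - y) ^ q) x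

/-- The local fractional derivative of order `q ∈ (0,1)` of `f` at `y` exists and equals `L`:
`lim_{x → y⁺} d^q (f(x) - f(y)) / [d(x-y)]^q = L`. -/
def HasLFD (f : ℝ → ℝ) (q y L : ℝ) : Prop :=
  Tendsto (fun x => rlDeriv q y (fun u => f u - f y) x) (𝓝[>] y) (𝓝 L)

noncomputable def gfun (A c μ : ℝ) (u : ℝ) : ℝ := A * Real.exp (-c * |u| ^ μ) - A
noncomputable def gder (A c μ : ℝ) (u : ℝ) : ℝ :=
  A * (Real.exp (-c * u ^ μ) * (-c * (μ * u ^ (μ - 1))))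

section
variable {A c μ q : ℝ}

lemma gfun_meas : Measurable (gfun A c μ) := by unfold gfun; fun_prop

lemma gder_meas : Measurable (gder A c μ) := by unfold gder; fun_prop

lemma exp_neg_le_one {x : ℝ} (hx : 0 ≤ x) : Real.exp (-x) ≤ 1 := by
  rw [Real.exp_le_one_iff]; linarith

lemma gfun_abs_le (hA : 0 < A) (hc : 0 < c) (u : ℝ) :
    |gfun A c μ u| ≤ A * (c * |u| ^ μ) := by
  unfold gfun
  rw [neg_mul]
  set x := c * |u| ^ μ with hxdef
  have hx : 0 ≤ x := by positivity
  have h1 : Real.exp (-x) ≤ 1 := exp_neg_le_one hx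
  have h2 : 1 - x ≤ Real.exp (-x) := by
    have := Real.add_one_le_exp (-x); linarith
  rw [abs_le]
  constructor <;> nlinarith [mul_le_mul_of_nonneg_left h2 hA.le,
    mul_le_mul_of_nonneg_left h1 hA.le]

lemma gfun_abs_le' (hA : 0 < A) (hc : 0 < c) (u : ℝ) : |gfun A c μ u| ≤ A := by
  unfold gfun
  rw [neg_mul]
  have h1 : Real.exp (-(c * |u| ^ μ)) ≤ 1 := exp_neg_le_one (by positivity)
  have h2 : 0 < Real.exp (-(c * |u| ^ μ)) := Real.exp_pos _
  rw [abs_le]; constructor <;> nlinarith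

lemma gder_abs_le (hA : 0 < A) (hc : 0 < c) (hμ0 : 0 < μ) {u : ℝ} (hu : 0 ≤ u) :
    |gder A c μ u| ≤ A * c * μ * u ^ (μ - 1) := by
  unfold gder
  rw [neg_mul]
  have h1 : Real.exp (-(c * u ^ μ)) ≤ 1 := exp_neg_le_one (by positivity)
  have h2 : 0 < Real.exp (-(c * u ^ μ)) := Real.exp_pos _
  have h3 : (0:ℝ) ≤ u ^ (μ - 1) := Real.rpow_nonneg hu _
  have h4 : Real.exp (-(c * u ^ μ)) * u ^ (μ - 1) ≤ u ^ (μ - 1) :=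
    mul_le_of_le_one_left h3 h1
  have h5 : 0 ≤ Real.exp (-(c * u ^ μ)) * u ^ (μ - 1) := by positivity
  rw [abs_le]
  constructor <;> nlinarith [mul_le_mul_of_nonneg_left h4 (by positivity : (0:ℝ) ≤ A * c * μ),
    mul_nonneg (by positivity : (0:ℝ) ≤ A * c * μ) h5]

lemma gder_nonpos (hA : 0 < A) (hc : 0 < c) (hμ0 : 0 < μ) {u : ℝ} (hu : 0 ≤ u) :
    gder A c μ u ≤ 0 := by
  unfold gder
  have h2 : 0 < Real.exp (-c * u ^ μ) := Real.exp_pos _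
  have h3 : (0:ℝ) ≤ u ^ (μ - 1) := Real.rpow_nonneg hu _
  nlinarith [mul_nonneg h2.le h3, mul_pos (mul_pos hA hc) hμ0]

lemma gfun_le_neg (hA : 0 < A) (hc : 0 < c) {u : ℝ} (hu : 0 ≤ u)
    (h1 : c * u ^ μ ≤ 1) :
    gfun A c μ u ≤ -(A * c * Real.exp (-1)) * u ^ μ := by
  unfold gfun
  rw [abs_of_nonneg hu, neg_mul]
  have hx0 : 0 ≤ c * u ^ μ := by positivity
  have key : Real.exp (-(c * u ^ μ)) - 1 ≤ -(c * u ^ μ) * Real.exp (-(c * u ^ μ)) := by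
    have h := Real.add_one_le_exp (c * u ^ μ)
    have h2 : (c * u ^ μ + 1) * Real.exp (-(c * u ^ μ)) ≤ 1 := by
      have h3 := Real.exp_pos (-(c * u ^ μ))
      calc (c * u ^ μ + 1) * Real.exp (-(c * u ^ μ))
          ≤ Real.exp (c * u ^ μ) * Real.exp (-(c * u ^ μ)) := by nlinarith
        _ = 1 := by rw [← Real.exp_add]; simp
    nlinarith [Real.exp_pos (-(c * u ^ μ))]
  have hmono : Real.exp (-1) ≤ Real.exp (-(c * u ^ μ)) := Real.exp_le_exp.mpr (by linarith)
  have step : Real.exp (-(c * u ^ μ)) - 1 ≤ -(c * u ^ μ) * Real.exp (-1) := by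
    nlinarith [mul_le_mul_of_nonneg_left hmono hx0]
  have := mul_le_mul_of_nonneg_left step hA.le
  nlinarith [this]

lemma gfun_hasDerivAt (hμ0 : 0 < μ) {u : ℝ} (hu : 0 < u) :
    HasDerivAt (gfun A c μ) (gder A c μ u) u := by
  have h1 : HasDerivAt (fun v : ℝ => v ^ μ) (μ * u ^ (μ - 1)) u :=
    Real.hasDerivAt_rpow_const (Or.inl hu.ne')
  have h2 := (h1.const_mul (-c)).exp.const_mul A
  have h3 := h2.sub_const A
  have heq : (fun v : ℝ => A * Real.exp (-c * v ^ μ) - A) =ᶠ[nhds u] gfun A c μ := by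
    filter_upwards [isOpen_Ioi.mem_nhds (show u ∈ Ioi (0:ℝ) from hu)] with v hv
    simp [gfun, abs_of_pos (show (0:ℝ) < v from hv)]
  exact h3.congr_of_eventuallyEq heq.symm
lemma oneSub_int (hq1 : q < 1) :
    IntervalIntegrable (fun s : ℝ => (1 - s) ^ (-q)) volume 0 1 := by
  have h := (intervalIntegral.intervalIntegrable_rpow'
    (a := 0) (b := 1) (r := -q) (by linarith)).comp_sub_left 1
  simpa using h.symm

lemma int_mul_oneSub (hq1 : q < 1) {φ : ℝ → ℝ} (hφ : Measurable φ) {M : ℝ}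
    (hM : ∀ s ∈ Ioc (0:ℝ) 1, |φ s| ≤ M) :
    IntervalIntegrable (fun s => φ s * (1 - s) ^ (-q)) volume 0 1 := by
  have hbase := oneSub_int (q := q) hq1
  rw [intervalIntegrable_iff_integrableOn_Ioc_of_le (by norm_num)] at hbase ⊢
  apply Integrable.mono' (hbase.const_mul M)
  · exact (by fun_prop : Measurable fun s => φ s * (1 - s) ^ (-q)).aestronglyMeasurable
  · rw [ae_restrict_iff' measurableSet_Ioc]
    filter_upwards with s hs
    have h1 : (0:ℝ) ≤ (1 - s) ^ (-q) := Real.rpow_nonneg (by linarith [hs.2]) _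
    rw [Real.norm_eq_abs, abs_mul, abs_of_nonneg h1]
    exact mul_le_mul_of_nonneg_right (hM s hs) h1

lemma subst_lemma (hA : 0 < A) (hc : 0 < c) (hq0 : 0 < q) {x : ℝ} (hx : 0 < x) :
    (∫ y in (0:ℝ)..x, gfun A c μ y / (x - y) ^ q)
      = x ^ (1 - q) * ∫ s in (0:ℝ)..1, gfun A c μ (x * s) * (1 - s) ^ (-q) := by
  have h := integral_comp_mul_left (a := 0) (b := 1)
    (fun y => gfun A c μ y / (x - y) ^ q) hx.ne'
  simp only [mul_zero, mul_one, smul_eq_mul] at h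
  have h2 : (∫ s in (0:ℝ)..1, gfun A c μ (x * s) / (x - x * s) ^ q)
      = x ^ (-q) * ∫ s in (0:ℝ)..1, gfun A c μ (x * s) * (1 - s) ^ (-q) := by
    rw [← intervalIntegral.integral_const_mul]
    apply intervalIntegral.integral_congr
    intro s hs
    rw [uIcc_of_le (by norm_num)] at hs
    obtain ⟨hs0, hs1⟩ := hs
    dsimp only
    have hfact : x - x * s = x * (1 - s) := by ring
    rw [hfact, Real.mul_rpow hx.le (by linarith), Real.rpow_neg hx.le,
        Real.rpow_neg (by linarith), div_eq_mul_inv, mul_inv]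
    ring
  rw [h2] at h
  have hxq : x ^ (1 - q) = x * x ^ (-q) := by
    rw [show (1:ℝ) - q = 1 + (-q) by ring, Real.rpow_add hx, Real.rpow_one]
  rw [hxq]
  have := congrArg (fun z => x * z) h
  rw [mul_assoc, this, ← mul_assoc, mul_inv_cancel₀ hx.ne', one_mul]

lemma gder_mul_bound (hA : 0 < A) (hc : 0 < c) (hμ0 : 0 < μ) (hμ1 : μ < 1)
    {x s : ℝ} (hx : 0 < x) (hs : s ∈ Ioc (0:ℝ) 1) :
    |gder A c μ (x * s) * s| ≤ A * c * μ * x ^ (μ - 1) := by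
  obtain ⟨hs0, hs1⟩ := hs
  have h1 : |gder A c μ (x * s)| ≤ A * c * μ * (x * s) ^ (μ - 1) :=
    gder_abs_le hA hc hμ0 (by positivity)
  have h2 : (x * s) ^ (μ - 1) = x ^ (μ - 1) * s ^ (μ - 1) :=
    Real.mul_rpow hx.le hs0.le
  have h3 : s ^ (μ - 1) * s = s ^ μ := by
    rw [← Real.rpow_add_one hs0.ne' (μ - 1)]; norm_num
  have h4 : s ^ μ ≤ 1 := Real.rpow_le_one hs0.le hs1 hμ0.le
  have h5 : (0:ℝ) ≤ x ^ (μ - 1) := Real.rpow_nonneg hx.le _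
  calc |gder A c μ (x * s) * s| = |gder A c μ (x * s)| * s := by
        rw [abs_mul, abs_of_nonneg hs0.le]
    _ ≤ A * c * μ * (x * s) ^ (μ - 1) * s :=
        mul_le_mul_of_nonneg_right h1 hs0.le
    _ = A * c * μ * x ^ (μ - 1) * s ^ μ := by rw [h2, ← h3]; ring
    _ ≤ A * c * μ * x ^ (μ - 1) * 1 := by
        apply mul_le_mul_of_nonneg_left h4 (by positivity)
    _ = A * c * μ * x ^ (μ - 1) := by ring

lemma H_hasDerivAt (hA : 0 < A) (hc : 0 < c) (hμ0 : 0 < μ) (hμ1 : μ < 1)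
    (hq0 : 0 < q) (hq1 : q < 1) {t : ℝ} (ht : 0 < t) :
    HasDerivAt (fun x => ∫ s in (0:ℝ)..1, gfun A c μ (x * s) * (1 - s) ^ (-q))
      (∫ s in (0:ℝ)..1, gder A c μ (t * s) * s * (1 - s) ^ (-q)) t := by
  have huIoc : Set.uIoc (0:ℝ) 1 = Ioc 0 1 := uIoc_of_le (by norm_num)
  have hball : ∀ x ∈ Metric.ball t (t/2), 0 < x ∧ t/2 ≤ x := by
    intro x hx
    rw [Metric.mem_ball, Real.dist_eq, abs_lt] at hx
    constructor <;> linarith [hx.1]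
  have := intervalIntegral.hasDerivAt_integral_of_dominated_loc_of_deriv_le
    (F := fun x s => gfun A c μ (x * s) * (1 - s) ^ (-q))
    (F' := fun x s => gder A c μ (x * s) * s * (1 - s) ^ (-q))
    (μ := volume) (a := 0) (b := 1) (x₀ := t)
    (bound := fun s => (A * c * μ * (t/2) ^ (μ - 1)) * (1 - s) ^ (-q))
    (Metric.ball_mem_nhds t (show 0 < t/2 by linarith))
    (Filter.Eventually.of_forall fun x =>
      ((gfun_meas.comp (measurable_id.const_mul x)).mul
        (by fun_prop : Measurable fun s : ℝ => (1 - s) ^ (-q))).aestronglyMeasurable.restrict)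
    (int_mul_oneSub hq1 (gfun_meas.comp (measurable_id.const_mul t))
      (fun s _ => gfun_abs_le' hA hc _))
    (((gder_meas.comp (measurable_id.const_mul t)).mul measurable_id |>.mul
      (by fun_prop : Measurable fun s : ℝ => (1 - s) ^ (-q))).aestronglyMeasurable.restrict)
    ?_ ((oneSub_int hq1).const_mul _) ?_
  · exact this.2
  · -- bound
    refine Filter.Eventually.of_forall fun s hs x hx => ?_
    rw [huIoc] at hs
    obtain ⟨hx0, hx2⟩ := hball x hx
    have h1 : (0:ℝ) ≤ (1 - s) ^ (-q) := Real.rpow_nonneg (by linarith [hs.2]) _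
    rw [Real.norm_eq_abs, abs_mul, abs_of_nonneg h1]
    apply mul_le_mul_of_nonneg_right _ h1
    calc |gder A c μ (x * s) * s| ≤ A * c * μ * x ^ (μ - 1) :=
          gder_mul_bound hA hc hμ0 hμ1 hx0 hs
      _ ≤ A * c * μ * (t/2) ^ (μ - 1) := by
          apply mul_le_mul_of_nonneg_left _ (by positivity)
          exact Real.rpow_le_rpow_of_nonpos (by linarith) hx2 (by linarith)
  · -- differentiability
    refine Filter.Eventually.of_forall fun s hs x hx => ?_
    rw [huIoc] at hs
    obtain ⟨hx0, _⟩ := hball x hx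
    have hxs : 0 < x * s := mul_pos hx0 hs.1
    exact (((gfun_hasDerivAt hμ0 hxs).comp x (hasDerivAt_mul_const s)).mul_const _)

lemma deriv_formula (hA : 0 < A) (hc : 0 < c) (hμ0 : 0 < μ) (hμ1 : μ < 1)
    (hq0 : 0 < q) (hq1 : q < 1) {t : ℝ} (ht : 0 < t) :
    deriv (fun x => ∫ y in (0:ℝ)..x, gfun A c μ y / (x - y) ^ q) t
      = (1 - q) * t ^ (-q) * (∫ s in (0:ℝ)..1, gfun A c μ (t * s) * (1 - s) ^ (-q))
        + t ^ (1 - q) * (∫ s in (0:ℝ)..1, gder A c μ (t * s) * s * (1 - s) ^ (-q)) := by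
  have hrp : HasDerivAt (fun x : ℝ => x ^ (1 - q)) ((1 - q) * t ^ (-q)) t := by
    have h := Real.hasDerivAt_rpow_const (x := t) (p := 1 - q) (Or.inl ht.ne')
    convert h using 2; ring_nf
  have hG := hrp.mul (H_hasDerivAt hA hc hμ0 hμ1 hq0 hq1 ht)
  have hev : (fun x => ∫ y in (0:ℝ)..x, gfun A c μ y / (x - y) ^ q)
      =ᶠ[nhds t] fun x => x ^ (1 - q) * ∫ s in (0:ℝ)..1, gfun A c μ (x * s) * (1 - s) ^ (-q) := by
    filter_upwards [isOpen_Ioi.mem_nhds (show t ∈ Ioi (0:ℝ) from ht)] with x hx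
    exact subst_lemma hA hc hq0 hx
  exact (hG.congr_of_eventuallyEq hev).deriv
lemma H_abs_le (hA : 0 < A) (hc : 0 < c) (hμ0 : 0 < μ) (hq1 : q < 1)
    {x : ℝ} (hx : 0 < x) :
    |∫ s in (0:ℝ)..1, gfun A c μ (x * s) * (1 - s) ^ (-q)|
      ≤ A * c * x ^ μ * |∫ s in (0:ℝ)..1, (1 - s) ^ (-q)| := by
  have h := intervalIntegral.norm_integral_le_of_norm_le
    (f := fun s => gfun A c μ (x * s) * (1 - s) ^ (-q)) (μ := volume) (a := 0) (b := 1)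
    (g := fun s => (A * c * x ^ μ) * (1 - s) ^ (-q)) (by norm_num) ?_ ((oneSub_int hq1).const_mul _)
  · rw [intervalIntegral.integral_const_mul] at h
    have h' := h.trans (mul_le_mul_of_nonneg_left (le_abs_self (∫ s in (0:ℝ)..1, (1 - s) ^ (-q)))
      (by positivity : (0:ℝ) ≤ A * c * x ^ μ))
    simpa using h'
  · filter_upwards with s hs
    have h1 : (0:ℝ) ≤ (1 - s) ^ (-q) := Real.rpow_nonneg (by linarith [hs.2]) _
    rw [Real.norm_eq_abs, abs_mul, abs_of_nonneg h1]
    apply mul_le_mul_of_nonneg_right _ h1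
    calc |gfun A c μ (x * s)| ≤ A * (c * |x * s| ^ μ) := gfun_abs_le hA hc _
      _ ≤ A * c * x ^ μ := by
          rw [abs_of_nonneg (mul_pos hx hs.1).le,
            Real.mul_rpow hx.le hs.1.le]
          have h4 : s ^ μ ≤ 1 := Real.rpow_le_one hs.1.le hs.2 hμ0.le
          have h5 : (0:ℝ) ≤ x ^ μ := Real.rpow_nonneg hx.le _
          nlinarith [mul_le_mul_of_nonneg_left h4 (mul_nonneg (mul_nonneg hA.le hc.le) h5)]

lemma H'_abs_le (hA : 0 < A) (hc : 0 < c) (hμ0 : 0 < μ) (hμ1 : μ < 1) (hq1 : q < 1)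
    {x : ℝ} (hx : 0 < x) :
    |∫ s in (0:ℝ)..1, gder A c μ (x * s) * s * (1 - s) ^ (-q)|
      ≤ A * c * μ * x ^ (μ - 1) * |∫ s in (0:ℝ)..1, (1 - s) ^ (-q)| := by
  have h := intervalIntegral.norm_integral_le_of_norm_le
    (f := fun s => gder A c μ (x * s) * s * (1 - s) ^ (-q)) (μ := volume) (a := 0) (b := 1)
    (g := fun s => (A * c * μ * x ^ (μ - 1)) * (1 - s) ^ (-q)) (by norm_num) ?_
    ((oneSub_int hq1).const_mul _)
  · rw [intervalIntegral.integral_const_mul] at h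
    have h' := h.trans (mul_le_mul_of_nonneg_left (le_abs_self (∫ s in (0:ℝ)..1, (1 - s) ^ (-q)))
      (by positivity : (0:ℝ) ≤ A * c * μ * x ^ (μ - 1)))
    simpa using h'
  · filter_upwards with s hs
    have h1 : (0:ℝ) ≤ (1 - s) ^ (-q) := Real.rpow_nonneg (by linarith [hs.2]) _
    rw [Real.norm_eq_abs, abs_mul, abs_of_nonneg h1]
    exact mul_le_mul_of_nonneg_right (gder_mul_bound hA hc hμ0 hμ1 hx hs) h1
lemma rpow_tendsto_zero {p : ℝ} (hp : 0 < p) :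
    Tendsto (fun x : ℝ => x ^ p) (𝓝[>] 0) (𝓝 0) := by
  have h := (Real.continuousAt_rpow_const 0 p (Or.inr hp.le)).tendsto
  rw [Real.zero_rpow hp.ne'] at h
  exact h.mono_left nhdsWithin_le_nhds

lemma rpow_tendsto_atTop {p : ℝ} (hp : p < 0) :
    Tendsto (fun x : ℝ => x ^ p) (𝓝[>] 0) atTop := by
  have h : Tendsto (fun x : ℝ => (x⁻¹) ^ (-p)) (𝓝[>] 0) atTop :=
    (tendsto_rpow_atTop (by linarith)).comp tendsto_inv_nhdsGT_zero
  apply h.congr'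
  filter_upwards [self_mem_nhdsWithin] with x (hx : 0 < x)
  rw [Real.inv_rpow hx.le, ← Real.rpow_neg hx.le, neg_neg]

lemma part1 (hA : 0 < A) (hc : 0 < c) (hμ0 : 0 < μ) (hμ1 : μ < 1)
    (hq0 : 0 < q) (hqμ : q < μ) :
    Tendsto (fun x => rlDeriv q 0 (gfun A c μ) x) (𝓝[>] (0:ℝ)) (𝓝 0) := by
  have hq1 : q < 1 := lt_trans hqμ hμ1
  set C₀ : ℝ := |∫ s in (0:ℝ)..1, (1 - s) ^ (-q)| with hC₀
  have hΓ : 0 < Real.Gamma (1 - q) := Real.Gamma_pos_of_pos (by linarith)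
  set Kc : ℝ := (1 / Real.Gamma (1 - q)) * (A * c * C₀ * ((1 - q) + μ)) with hKc
  apply squeeze_zero_norm' (a := fun x => Kc * x ^ (μ - q))
  · filter_upwards [self_mem_nhdsWithin] with x (hx : 0 < x)
    rw [rlDeriv, Real.norm_eq_abs, abs_mul, deriv_formula hA hc hμ0 hμ1 hq0 hq1 hx]
    rw [abs_of_nonneg (by positivity : (0:ℝ) ≤ 1 / Real.Gamma (1 - q))]
    have hH := H_abs_le hA hc hμ0 hq1 hx
    have hH' := H'_abs_le hA hc hμ0 hμ1 hq1 hx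
    have e1 : x ^ (-q) * x ^ μ = x ^ (μ - q) := by
      rw [← Real.rpow_add hx]; ring_nf
    have e2 : x ^ (1 - q) * x ^ (μ - 1) = x ^ (μ - q) := by
      rw [← Real.rpow_add hx]; ring_nf
    have hxq : (0:ℝ) ≤ x ^ (-q) := Real.rpow_nonneg hx.le _
    have hx1q : (0:ℝ) ≤ x ^ (1 - q) := Real.rpow_nonneg hx.le _
    have main : |(1 - q) * x ^ (-q) * (∫ s in (0:ℝ)..1, gfun A c μ (x * s) * (1 - s) ^ (-q))
          + x ^ (1 - q) * (∫ s in (0:ℝ)..1, gder A c μ (x * s) * s * (1 - s) ^ (-q))|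
        ≤ A * c * C₀ * ((1 - q) + μ) * x ^ (μ - q) := by
      have t1 : |(1 - q) * x ^ (-q) * (∫ s in (0:ℝ)..1, gfun A c μ (x * s) * (1 - s) ^ (-q))|
          ≤ (1 - q) * x ^ (-q) * (A * c * x ^ μ * C₀) := by
        rw [abs_mul, abs_of_nonneg (mul_nonneg (by linarith : (0:ℝ) ≤ 1 - q) hxq)]
        exact mul_le_mul_of_nonneg_left hH (mul_nonneg (by linarith : (0:ℝ) ≤ 1 - q) hxq)
      have t2 : |x ^ (1 - q) * (∫ s in (0:ℝ)..1, gder A c μ (x * s) * s * (1 - s) ^ (-q))|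
          ≤ x ^ (1 - q) * (A * c * μ * x ^ (μ - 1) * C₀) := by
        rw [abs_mul, abs_of_nonneg hx1q]
        exact mul_le_mul_of_nonneg_left hH' hx1q
      have t3 := (abs_add_le _ _).trans (add_le_add t1 t2)
      refine t3.trans (le_of_eq ?_)
      rw [show (1 - q) * x ^ (-q) * (A * c * x ^ μ * C₀) = (1-q) * (A*c*C₀) * (x ^ (-q) * x ^ μ) by ring,
        show x ^ (1 - q) * (A * c * μ * x ^ (μ - 1) * C₀) = μ * (A*c*C₀) * (x ^ (1-q) * x ^ (μ-1)) by ring,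
        e1, e2]
      ring
    calc 1 / Real.Gamma (1 - q) * |(1 - q) * x ^ (-q) * (∫ s in (0:ℝ)..1, gfun A c μ (x * s) * (1 - s) ^ (-q))
          + x ^ (1 - q) * (∫ s in (0:ℝ)..1, gder A c μ (x * s) * s * (1 - s) ^ (-q))|
        ≤ 1 / Real.Gamma (1 - q) * (A * c * C₀ * ((1 - q) + μ) * x ^ (μ - q)) :=
          mul_le_mul_of_nonneg_left main (by positivity)
      _ = Kc * x ^ (μ - q) := by rw [hKc]; ring
  · have := (rpow_tendsto_zero (show 0 < μ - q by linarith)).const_mul Kc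
    simpa using this
lemma B0_pos (hμ0 : 0 < μ) (hq1 : q < 1) :
    0 < ∫ s in (0:ℝ)..1, s ^ μ * (1 - s) ^ (-q) := by
  apply intervalIntegral.intervalIntegral_pos_of_pos_on
  · apply int_mul_oneSub hq1 (by fun_prop) (M := 1)
    intro s hs
    rw [abs_of_nonneg (Real.rpow_nonneg hs.1.le _)]
    exact Real.rpow_le_one hs.1.le hs.2 hμ0.le
  · intro s hs
    exact mul_pos (Real.rpow_pos_of_pos hs.1 _)
      (Real.rpow_pos_of_pos (by linarith [hs.2]) _)
  · norm_num

lemma part2 (hA : 0 < A) (hc : 0 < c) (hμ0 : 0 < μ) (hμ1 : μ < 1)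
    (hqμ : μ < q) (hq1 : q < 1) :
    Tendsto (fun x => rlDeriv q 0 (gfun A c μ) x) (𝓝[>] (0:ℝ)) atBot := by
  have hq0 : 0 < q := lt_trans hμ0 hqμ
  set B₀ : ℝ := ∫ s in (0:ℝ)..1, s ^ μ * (1 - s) ^ (-q) with hB₀
  have hB : 0 < B₀ := B0_pos hμ0 hq1
  have hΓ : 0 < Real.Gamma (1 - q) := Real.Gamma_pos_of_pos (by linarith)
  set K : ℝ := (1 / Real.Gamma (1 - q)) * ((1 - q) * (A * c * Real.exp (-1)) * B₀) with hK
  have hKpos : 0 < K := by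
    rw [hK]
    exact mul_pos (div_pos one_pos hΓ)
      (mul_pos (mul_pos (by linarith : (0:ℝ) < 1 - q)
        (mul_pos (mul_pos hA hc) (Real.exp_pos _))) hB)
  have hcx : ∀ᶠ x in 𝓝[>] (0:ℝ), c * x ^ μ ≤ 1 := by
    have h : Tendsto (fun x : ℝ => c * x ^ μ) (𝓝[>] 0) (𝓝 0) := by
      simpa using (rpow_tendsto_zero hμ0).const_mul c
    exact h.eventually (eventually_le_nhds one_pos)
  have hbound : ∀ᶠ x in 𝓝[>] (0:ℝ),
      rlDeriv q 0 (gfun A c μ) x ≤ -K * x ^ (μ - q) := by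
    filter_upwards [self_mem_nhdsWithin, hcx] with x (hx : 0 < x) hcx1
    rw [rlDeriv, deriv_formula hA hc hμ0 hμ1 hq0 hq1 hx]
    have hxq : (0:ℝ) ≤ x ^ (-q) := Real.rpow_nonneg hx.le _
    have hx1q : (0:ℝ) ≤ x ^ (1 - q) := Real.rpow_nonneg hx.le _
    -- H' ≤ 0
    have hH'le : (∫ s in (0:ℝ)..1, gder A c μ (x * s) * s * (1 - s) ^ (-q)) ≤ 0 := by
      rw [intervalIntegral.integral_of_le (by norm_num : (0:ℝ) ≤ 1)]
      refine MeasureTheory.integral_nonpos_of_ae ?_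
      rw [Filter.EventuallyLE, ae_restrict_iff' measurableSet_Ioc]
      refine Filter.Eventually.of_forall fun s hs => ?_
      have h0 : (0:ℝ) ≤ x * s := (mul_pos hx hs.1).le
      have hg := gder_nonpos hA hc hμ0 h0
      have hw : (0:ℝ) ≤ (1 - s) ^ (-q) := Real.rpow_nonneg (by linarith [hs.2]) _
      have := mul_nonneg (mul_nonneg (neg_nonneg.2 hg) hs.1.le) hw
      simp only [Pi.zero_apply]
      nlinarith
    -- H ≤ -(Ace⁻¹) x^μ B₀
    have hHle : (∫ s in (0:ℝ)..1, gfun A c μ (x * s) * (1 - s) ^ (-q))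
        ≤ -(A * c * Real.exp (-1)) * x ^ μ * B₀ := by
      have hint1 : IntervalIntegrable (fun s => gfun A c μ (x * s) * (1 - s) ^ (-q))
          volume 0 1 :=
        int_mul_oneSub hq1 (gfun_meas.comp (measurable_id.const_mul x))
          (fun s _ => gfun_abs_le' hA hc _)
      have hint2 : IntervalIntegrable
          (fun s => (-(A * c * Real.exp (-1)) * x ^ μ) * (s ^ μ * (1 - s) ^ (-q)))
          volume 0 1 := by
        apply IntervalIntegrable.const_mul
        apply int_mul_oneSub hq1 (by fun_prop) (M := 1)
        intro s hs
        rw [abs_of_nonneg (Real.rpow_nonneg hs.1.le _)]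
        exact Real.rpow_le_one hs.1.le hs.2 hμ0.le
      have hmono := intervalIntegral.integral_mono_on (by norm_num : (0:ℝ) ≤ 1)
        hint1 hint2 ?_
      · rw [intervalIntegral.integral_const_mul] at hmono
        calc (∫ s in (0:ℝ)..1, gfun A c μ (x * s) * (1 - s) ^ (-q))
            ≤ -(A * c * Real.exp (-1)) * x ^ μ * ∫ s in (0:ℝ)..1, s ^ μ * (1 - s) ^ (-q) :=
            hmono
          _ = -(A * c * Real.exp (-1)) * x ^ μ * B₀ := by rw [hB₀]
      · intro s hs
        have h0 : (0:ℝ) ≤ x * s := mul_nonneg hx.le hs.1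
        have hsμ : s ^ μ ≤ 1 := Real.rpow_le_one hs.1 hs.2 hμ0.le
        have hxsμ : (x * s) ^ μ = x ^ μ * s ^ μ := Real.mul_rpow hx.le hs.1
        have hcxs : c * (x * s) ^ μ ≤ 1 := by
          rw [hxsμ]
          have hxμ : (0:ℝ) ≤ x ^ μ := Real.rpow_nonneg hx.le _
          nlinarith [Real.rpow_nonneg hs.1 μ]
        have hg := gfun_le_neg hA hc h0 hcxs
        have hw : (0:ℝ) ≤ (1 - s) ^ (-q) := Real.rpow_nonneg (by linarith [hs.2]) _
        calc gfun A c μ (x * s) * (1 - s) ^ (-q)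
            ≤ (-(A * c * Real.exp (-1)) * (x * s) ^ μ) * (1 - s) ^ (-q) :=
            mul_le_mul_of_nonneg_right hg hw
          _ = -(A * c * Real.exp (-1)) * x ^ μ * (s ^ μ * (1 - s) ^ (-q)) := by
            rw [hxsμ]; ring
    -- combine
    have e1 : x ^ (-q) * x ^ μ = x ^ (μ - q) := by
      rw [← Real.rpow_add hx]; ring_nf
    have s1 : x ^ (1 - q) * (∫ s in (0:ℝ)..1, gder A c μ (x * s) * s * (1 - s) ^ (-q)) ≤ 0 := by
      have := mul_le_mul_of_nonneg_left hH'le hx1q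
      simpa using this
    have s2 : (1 - q) * x ^ (-q) * (∫ s in (0:ℝ)..1, gfun A c μ (x * s) * (1 - s) ^ (-q))
        ≤ (1 - q) * x ^ (-q) * (-(A * c * Real.exp (-1)) * x ^ μ * B₀) :=
      mul_le_mul_of_nonneg_left hHle (mul_nonneg (by linarith) hxq)
    have key : (1 - q) * x ^ (-q) * (∫ s in (0:ℝ)..1, gfun A c μ (x * s) * (1 - s) ^ (-q))
          + x ^ (1 - q) * (∫ s in (0:ℝ)..1, gder A c μ (x * s) * s * (1 - s) ^ (-q))
        ≤ (1 - q) * x ^ (-q) * (-(A * c * Real.exp (-1)) * x ^ μ * B₀) := by linarith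
    calc 1 / Real.Gamma (1 - q) *
          ((1 - q) * x ^ (-q) * (∫ s in (0:ℝ)..1, gfun A c μ (x * s) * (1 - s) ^ (-q))
            + x ^ (1 - q) * (∫ s in (0:ℝ)..1, gder A c μ (x * s) * s * (1 - s) ^ (-q)))
        ≤ 1 / Real.Gamma (1 - q) *
            ((1 - q) * x ^ (-q) * (-(A * c * Real.exp (-1)) * x ^ μ * B₀)) :=
          mul_le_mul_of_nonneg_left key (by positivity)
      _ = -K * x ^ (μ - q) := by
          rw [show (1 - q) * x ^ (-q) * (-(A * c * Real.exp (-1)) * x ^ μ * B₀)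
              = -((1 - q) * (A * c * Real.exp (-1)) * B₀) * (x ^ (-q) * x ^ μ) by ring,
            e1, hK]
          ring
  have hpow : Tendsto (fun x : ℝ => x ^ (μ - q)) (𝓝[>] 0) atTop :=
    rpow_tendsto_atTop (by linarith)
  have hneg : Tendsto (fun x : ℝ => -K * x ^ (μ - q)) (𝓝[>] (0:ℝ)) atBot := by
    have h1 := hpow.const_mul_atTop hKpos
    have h2 := tendsto_neg_atTop_atBot.comp h1
    refine h2.congr fun x => ?_
    simp [Function.comp, neg_mul]
  exact tendsto_atBot_mono' _ hbound hneg

end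

theorem stmt17 (A c μ : ℝ) (hA : 0 < A) (hc : 0 < c) (hμ0 : 0 < μ) (hμ1 : μ < 1) :
    (∀ q : ℝ, 0 < q → q < μ →
      HasLFD (fun k : ℝ => A * Real.exp (-c * |k| ^ μ)) q 0 0) ∧
    (∀ q : ℝ, μ < q → q < 1 →
      ¬ ∃ L, HasLFD (fun k : ℝ => A * Real.exp (-c * |k| ^ μ)) q 0 L) := by
  have hfg : (fun u : ℝ => (fun k : ℝ => A * Real.exp (-c * |k| ^ μ)) u
      - (fun k : ℝ => A * Real.exp (-c * |k| ^ μ)) 0) = gfun A c μ := by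
    funext u
    simp [gfun, Real.zero_rpow hμ0.ne']
  constructor
  · intro q hq0 hqμ
    rw [HasLFD, hfg]
    exact part1 hA hc hμ0 hμ1 hq0 hqμ
  · intro q hqμ hq1
    rintro ⟨L, hL⟩
    rw [HasLFD, hfg] at hL
    exact not_tendsto_nhds_of_tendsto_atBot (part2 hA hc hμ0 hμ1 hqμ hq1) L hL
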